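/- Let n ≥ 1 and 0 ≤ k ≤ n−1 be integers, α, β ∈ ℝ, and x₁, x₂, … ∈ ℝ. Then Σ_{j=1}^{n−k} (α·j + β)·C(n,j)·x_j·B_{n−j,k}(x₁,…,x_{n−j−k+1}) = (α·n + β·(k+1))·B_{n,k+1}(x₁,…,x_{n−k}), where C(n,j) denotes the binomial coefficient. -/

import Mathlib

/-- The partial Bell polynomial `B_{n,k}(x₁,…,x_{n−k+1})`, defined by the explicit sum
`Σ n!/(j₁!⋯j_{n−k+1}!)·∏ᵢ(xᵢ/i!)^{jᵢ}` over nonnegative integers `j₁,…,j_{n−k+1}` with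
`j₁+⋯+j_{n−k+1} = k` and `1j₁+2j₂+⋯+(n−k+1)j_{n−k+1} = n`. -/
noncomputable def bellPoly (n k : ℕ) (x : ℕ → ℝ) : ℝ :=
  ∑ j ∈ (Finset.Nat.antidiagonalTuple (n - k + 1) k).filter
      (fun j : Fin (n - k + 1) → ℕ => ∑ i : Fin (n - k + 1), ((i : ℕ) + 1) * j i = n),
    (n.factorial : ℝ) / (∏ i : Fin (n - k + 1), ((j i).factorial : ℝ)) *
      ∏ i : Fin (n - k + 1), (x ((i : ℕ) + 1) / (((i : ℕ) + 1).factorial : ℝ)) ^ (j i)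

open Finset

/-- Index set: tuples of length `L` with entry sum `c` and weighted sum `n`. -/
def bellA (L n c : ℕ) : Finset (Fin L → ℕ) :=
  (Finset.Nat.antidiagonalTuple L c).filter
    (fun j : Fin L → ℕ => ∑ i : Fin L, ((i : ℕ) + 1) * j i = n)

/-- Generic summand of the Bell polynomial. -/
noncomputable def bellT (x : ℕ → ℝ) (n : ℕ) {L : ℕ} (j : Fin L → ℕ) : ℝ :=
  (n.factorial : ℝ) / (∏ i : Fin L, ((j i).factorial : ℝ)) *
    ∏ i : Fin L, (x ((i : ℕ) + 1) / (((i : ℕ) + 1).factorial : ℝ)) ^ (j i)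

lemma mem_bellA {L n c : ℕ} {j : Fin L → ℕ} :
    j ∈ bellA L n c ↔ (∑ i : Fin L, j i = c) ∧ (∑ i : Fin L, ((i : ℕ) + 1) * j i = n) := by
  simp [bellA, Finset.Nat.mem_antidiagonalTuple]

lemma bellPoly_eq (n k : ℕ) (x : ℕ → ℝ) :
    bellPoly n k x = ∑ j ∈ bellA (n - k + 1) n k, bellT x n j := rfl

lemma shrink_prod {M : Type*} [CommMonoid M] {t L : ℕ} (hL : t ≤ L) (g : ℕ → M)
    (hg : ∀ i, t ≤ i → g i = 1) : ∏ i : Fin L, g (i : ℕ) = ∏ i : Fin t, g (i : ℕ) := by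
  rw [Fin.prod_univ_eq_prod_range g, Fin.prod_univ_eq_prod_range g]
  exact (Finset.prod_subset (Finset.range_subset_range.2 hL)
    (fun i _ hi => hg i (by simpa using hi))).symm

lemma shrink_sum {M : Type*} [AddCommMonoid M] {t L : ℕ} (hL : t ≤ L) (g : ℕ → M)
    (hg : ∀ i, t ≤ i → g i = 0) : ∑ i : Fin L, g (i : ℕ) = ∑ i : Fin t, g (i : ℕ) := by
  rw [Fin.sum_univ_eq_sum_range g, Fin.sum_univ_eq_sum_range g]
  exact (Finset.sum_subset (Finset.range_subset_range.2 hL)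
    (fun i _ hi => hg i (by simpa using hi))).symm

lemma sum_update_fin {M : Type*} [AddCommMonoid M] {L : ℕ} (G : Fin L → ℕ → M)
    (j : Fin L → ℕ) (i : Fin L) (b : ℕ) :
    ∑ l, G l (Function.update j i b l)
      = (∑ l ∈ Finset.univ.erase i, G l (j l)) + G i b := by
  rw [← Finset.sum_erase_add _ _ (Finset.mem_univ i), Function.update_self]
  congr 1
  exact Finset.sum_congr rfl fun l hl => by
    rw [Function.update_of_ne (Finset.ne_of_mem_erase hl)]

lemma prod_update_fin {M : Type*} [CommMonoid M] {L : ℕ} (G : Fin L → ℕ → M)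
    (j : Fin L → ℕ) (i : Fin L) (b : ℕ) :
    ∏ l, G l (Function.update j i b l)
      = (∏ l ∈ Finset.univ.erase i, G l (j l)) * G i b := by
  rw [← Finset.prod_erase_mul _ _ (Finset.mem_univ i), Function.update_self]
  congr 1
  exact Finset.prod_congr rfl fun l hl => by
    rw [Function.update_of_ne (Finset.ne_of_mem_erase hl)]

/-- Members of `bellA L n k` vanish at indices `≥ n - k + 1`. -/
lemma bellA_vanish {L n k : ℕ} {j : Fin L → ℕ} (hj : j ∈ bellA L n k)
    {i : Fin L} (hi : n - k + 1 ≤ (i : ℕ)) : j i = 0 := by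
  obtain ⟨h1, h2⟩ := mem_bellA.1 hj
  by_contra h0
  have h0' : 1 ≤ j i := Nat.one_le_iff_ne_zero.2 h0
  have hsplit : ∑ l : Fin L, ((l : ℕ) + 1) * j l
      = (∑ l : Fin L, (l : ℕ) * j l) + ∑ l : Fin L, j l := by
    rw [← Finset.sum_add_distrib]
    exact Finset.sum_congr rfl fun l _ => by ring
  have hle : (i : ℕ) * j i ≤ ∑ l : Fin L, (l : ℕ) * j l :=
    Finset.single_le_sum (f := fun l : Fin L => (l : ℕ) * j l)
      (fun l _ => Nat.zero_le _) (Finset.mem_univ i)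
  have hii : (i : ℕ) ≤ (i : ℕ) * j i := Nat.le_mul_of_pos_right _ h0'
  omega

/-- Padding lemma: the Bell polynomial may be computed with tuples of any length
`L ≥ n - k + 1`. -/
lemma bell_pad (x : ℕ → ℝ) (n k L : ℕ) (hL : n - k + 1 ≤ L) :
    ∑ j ∈ bellA L n k, bellT x n j = bellPoly n k x := by
  rw [bellPoly_eq]
  set t := n - k + 1 with ht
  refine Finset.sum_nbij' (fun j => fun i : Fin t => j (Fin.castLE hL i))
    (fun j => fun i : Fin L => if h : (i : ℕ) < t then j ⟨(i : ℕ), h⟩ else 0)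
    ?_ ?_ ?_ ?_ ?_
  · -- restriction lands in bellA t n k
    intro j hj
    obtain ⟨h1, h2⟩ := mem_bellA.1 hj
    have key : ∀ i : Fin L, t ≤ (i : ℕ) → j i = 0 := fun i hi => bellA_vanish hj hi
    set J : ℕ → ℕ := fun a => if h : a < L then j ⟨a, h⟩ else 0 with hJ
    have hJ0 : ∀ a, t ≤ a → J a = 0 := by
      intro a ha
      by_cases h : a < L
      · simp only [hJ, dif_pos h]; exact key ⟨a, h⟩ ha
      · simp only [hJ, dif_neg h]
    have hJL : ∀ i : Fin L, j i = J (i : ℕ) := by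
      intro i; simp only [hJ, dif_pos i.isLt]
    have hJt : ∀ i : Fin t, j (Fin.castLE hL i) = J (i : ℕ) := by
      intro i; simp only [hJ, dif_pos (lt_of_lt_of_le i.isLt hL)]; rfl
    rw [mem_bellA]
    constructor
    · rw [Finset.sum_congr rfl (fun i _ => hJt i), ← shrink_sum hL J hJ0,
        Finset.sum_congr rfl (fun (i : Fin L) _ => (hJL i).symm)]
      exact h1
    · rw [Finset.sum_congr rfl (fun (i : Fin t) _ => by rw [hJt i]),
        ← shrink_sum hL (fun a => (a + 1) * J a) (fun a ha => by simp only [hJ0 a ha, Nat.mul_zero]),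
        Finset.sum_congr rfl (fun (i : Fin L) _ => by rw [← hJL i])]
      exact h2
  · -- extension lands in bellA L n k
    intro j hj
    obtain ⟨h1, h2⟩ := mem_bellA.1 hj
    set J : ℕ → ℕ := fun a => if h : a < t then j ⟨a, h⟩ else 0 with hJ
    have hJ0 : ∀ a, t ≤ a → J a = 0 := by
      intro a ha; simp only [hJ, dif_neg (Nat.not_lt.2 ha)]
    have hJt : ∀ i : Fin t, j i = J (i : ℕ) := by
      intro i; simp only [hJ, dif_pos i.isLt]
    rw [mem_bellA]
    constructor
    · rw [show (fun i : Fin L => if h : (i : ℕ) < t then j ⟨(i : ℕ), h⟩ else 0)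
          = fun i : Fin L => J (i : ℕ) from rfl,
        shrink_sum hL J hJ0, Finset.sum_congr rfl (fun (i : Fin t) _ => (hJt i).symm)]
      exact h1
    · rw [show (∑ i : Fin L, ((i : ℕ) + 1) *
          (if h : (i : ℕ) < t then j ⟨(i : ℕ), h⟩ else 0))
          = ∑ i : Fin L, (fun a => (a + 1) * J a) (i : ℕ) from rfl,
        shrink_sum hL (fun a => (a + 1) * J a)
          (fun a ha => by simp only [hJ0 a ha, Nat.mul_zero]),
        Finset.sum_congr rfl (fun (i : Fin t) _ => by rw [← hJt i])]
      exact h2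
  · -- left inverse
    intro j hj
    funext i
    dsimp only
    by_cases h : (i : ℕ) < t
    · rw [dif_pos h]
      exact congrArg j (Fin.ext rfl)
    · rw [dif_neg h]
      exact (bellA_vanish hj (Nat.not_lt.1 h)).symm
  · -- right inverse
    intro j hj
    funext i
    dsimp only
    rw [dif_pos (show ((Fin.castLE hL i : Fin L) : ℕ) < t from i.isLt)]
    exact congrArg j (Fin.ext rfl)
  · -- values agree
    intro j hj
    have key : ∀ i : Fin L, t ≤ (i : ℕ) → j i = 0 := fun i hi => bellA_vanish hj hi
    set J : ℕ → ℕ := fun a => if h : a < L then j ⟨a, h⟩ else 0 with hJ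
    have hJ0 : ∀ a, t ≤ a → J a = 0 := by
      intro a ha
      by_cases h : a < L
      · simp only [hJ, dif_pos h]; exact key ⟨a, h⟩ ha
      · simp only [hJ, dif_neg h]
    have hJL : ∀ i : Fin L, j i = J (i : ℕ) := by
      intro i; simp only [hJ, dif_pos i.isLt]
    have hJt : ∀ i : Fin t, j (Fin.castLE hL i) = J (i : ℕ) := by
      intro i; simp only [hJ, dif_pos (lt_of_lt_of_le i.isLt hL)]; rfl
    unfold bellT
    dsimp only
    congr 1
    · congr 1
      rw [Finset.prod_congr rfl (fun (i : Fin L) _ => by rw [hJL i]),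
        shrink_prod hL (fun a => ((J a).factorial : ℝ))
          (fun a ha => by simp [hJ0 a ha]),
        Finset.prod_congr rfl (fun (i : Fin t) _ => by rw [← hJt i])]
    · rw [Finset.prod_congr rfl (fun (i : Fin L) _ => by rw [hJL i]),
        shrink_prod hL (fun a => (x (a + 1) / ((a + 1).factorial : ℝ)) ^ (J a))
          (fun a ha => by simp [hJ0 a ha]),
        Finset.prod_congr rfl (fun (i : Fin t) _ => by rw [← hJt i])]

/-- Decrement lemma. -/
lemma bell_dec (x : ℕ → ℝ) (n k L : ℕ) (i : Fin L) (hm : (i : ℕ) + 1 ≤ n) :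
    ∑ j ∈ bellA L n (k + 1), (j i : ℝ) * bellT x n j
      = (n.choose ((i : ℕ) + 1) : ℝ) * x ((i : ℕ) + 1) *
        ∑ j ∈ bellA L (n - ((i : ℕ) + 1)) k, bellT x (n - ((i : ℕ) + 1)) j := by
  set m := (i : ℕ) + 1 with hmdef
  rw [Finset.mul_sum]
  rw [← Finset.sum_filter_of_ne (p := fun j : Fin L → ℕ => j i ≠ 0)
    (f := fun j : Fin L → ℕ => (j i : ℝ) * bellT x n j)
    (fun j _ hf h0 => hf (by simp [h0]))]
  refine Finset.sum_nbij' (fun j => Function.update j i (j i - 1))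
    (fun j => Function.update j i (j i + 1)) ?_ ?_ ?_ ?_ ?_
  · intro j hj
    rw [Finset.mem_filter] at hj
    obtain ⟨hj1, h3⟩ := hj
    obtain ⟨h1, h2⟩ := mem_bellA.1 hj1
    obtain ⟨c, hc⟩ : ∃ c, j i = c + 1 := ⟨j i - 1, by omega⟩
    rw [mem_bellA]
    have e1 : ∑ l, Function.update j i (j i - 1) l
        = (∑ l ∈ Finset.univ.erase i, j l) + (j i - 1) :=
      sum_update_fin (fun _ b => b) j i (j i - 1)
    have e1' : (∑ l ∈ Finset.univ.erase i, j l) + j i = k + 1 := by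
      rw [Finset.sum_erase_add _ _ (Finset.mem_univ i)]; exact h1
    have e2 : ∑ l : Fin L, ((l : ℕ) + 1) * Function.update j i (j i - 1) l
        = (∑ l ∈ Finset.univ.erase i, ((l : ℕ) + 1) * j l) + m * (j i - 1) :=
      sum_update_fin (fun l b => ((l : ℕ) + 1) * b) j i (j i - 1)
    have e2' : (∑ l ∈ Finset.univ.erase i, ((l : ℕ) + 1) * j l) + m * j i = n := by
      rw [Finset.sum_erase_add _ _ (Finset.mem_univ i)]; exact h2
    constructor
    · rw [e1]; omega
    · rw [e2, hc]
      rw [hc] at e2'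
      have : m * (c + 1 - 1) = m * c := by norm_num
      rw [this]
      have h2'' : (∑ l ∈ Finset.univ.erase i, ((l : ℕ) + 1) * j l) + m * c + m = n := by
        rw [← e2']; ring
      omega
  · intro j hj
    obtain ⟨h1, h2⟩ := mem_bellA.1 hj
    rw [Finset.mem_filter, mem_bellA]
    have e1 : ∑ l, Function.update j i (j i + 1) l
        = (∑ l ∈ Finset.univ.erase i, j l) + (j i + 1) :=
      sum_update_fin (fun _ b => b) j i (j i + 1)
    have e1' : (∑ l ∈ Finset.univ.erase i, j l) + j i = k := by
      rw [Finset.sum_erase_add _ _ (Finset.mem_univ i)]; exact h1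
    have e2 : ∑ l : Fin L, ((l : ℕ) + 1) * Function.update j i (j i + 1) l
        = (∑ l ∈ Finset.univ.erase i, ((l : ℕ) + 1) * j l) + m * (j i + 1) :=
      sum_update_fin (fun l b => ((l : ℕ) + 1) * b) j i (j i + 1)
    have e2' : (∑ l ∈ Finset.univ.erase i, ((l : ℕ) + 1) * j l) + m * j i = n - m := by
      rw [Finset.sum_erase_add _ _ (Finset.mem_univ i)]; exact h2
    refine ⟨⟨by rw [e1]; omega, ?_⟩, ?_⟩
    · rw [e2, Nat.mul_add, Nat.mul_one]
      omega
    · simp [Function.update_self]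
  · intro j hj
    rw [Finset.mem_filter] at hj
    have h3 : j i ≠ 0 := hj.2
    funext l
    rcases eq_or_ne l i with rfl | hl
    · simp only [Function.update_self]
      omega
    · simp only [Function.update_of_ne hl]
  · intro j _
    funext l
    rcases eq_or_ne l i with rfl | hl
    · simp only [Function.update_self]
      omega
    · simp only [Function.update_of_ne hl]
  · -- values agree
    intro j hj
    rw [Finset.mem_filter] at hj
    obtain ⟨hj1, h3⟩ := hj
    obtain ⟨h1, h2⟩ := mem_bellA.1 hj1
    obtain ⟨c, hc⟩ : ∃ c, j i = c + 1 := ⟨j i - 1, by omega⟩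
    unfold bellT
    have pf : ∏ l, ((j l).factorial : ℝ)
        = (∏ l ∈ Finset.univ.erase i, ((j l).factorial : ℝ)) * ((j i).factorial : ℝ) :=
      (Finset.prod_erase_mul _ _ (Finset.mem_univ i)).symm
    have pfu : ∏ l, (((Function.update j i (j i - 1)) l).factorial : ℝ)
        = (∏ l ∈ Finset.univ.erase i, ((j l).factorial : ℝ)) * ((j i - 1).factorial : ℝ) :=
      prod_update_fin (fun l b => ((b).factorial : ℝ)) j i (j i - 1)
    have px : ∏ l : Fin L, (x ((l : ℕ) + 1) / (((l : ℕ) + 1).factorial : ℝ)) ^ (j l)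
        = (∏ l ∈ Finset.univ.erase i, (x ((l : ℕ) + 1) / (((l : ℕ) + 1).factorial : ℝ)) ^ (j l))
          * (x m / (m.factorial : ℝ)) ^ (j i) :=
      (Finset.prod_erase_mul _ _ (Finset.mem_univ i)).symm
    have pxu : ∏ l : Fin L,
        (x ((l : ℕ) + 1) / (((l : ℕ) + 1).factorial : ℝ)) ^ ((Function.update j i (j i - 1)) l)
        = (∏ l ∈ Finset.univ.erase i, (x ((l : ℕ) + 1) / (((l : ℕ) + 1).factorial : ℝ)) ^ (j l))
          * (x m / (m.factorial : ℝ)) ^ (j i - 1) :=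
      prod_update_fin (fun l b => (x ((l : ℕ) + 1) / (((l : ℕ) + 1).factorial : ℝ)) ^ b) j i
        (j i - 1)
    rw [pf, pfu, px, pxu, hc]
    set P : ℝ := ∏ l ∈ Finset.univ.erase i, ((j l).factorial : ℝ) with hP
    set Q : ℝ := ∏ l ∈ Finset.univ.erase i,
      (x ((l : ℕ) + 1) / (((l : ℕ) + 1).factorial : ℝ)) ^ (j l) with hQ
    have hP0 : P ≠ 0 := by
      rw [hP]
      exact Finset.prod_ne_zero_iff.2 fun l _ => Nat.cast_ne_zero.2 (Nat.factorial_ne_zero _)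
    have hfact : (n.factorial : ℝ)
        = (n.choose m : ℝ) * (m.factorial : ℝ) * ((n - m).factorial : ℝ) := by
      exact_mod_cast (Nat.choose_mul_factorial_mul_factorial hm).symm
    have hsc : (c + 1 - 1) = c := by omega
    rw [hsc, hfact]
    have hm0 : (m.factorial : ℝ) ≠ 0 := Nat.cast_ne_zero.2 (Nat.factorial_ne_zero _)
    have hc0 : ((c + 1).factorial : ℝ) = (c + 1) * (c.factorial : ℝ) := by
      rw [Nat.factorial_succ]; push_cast; ring
    have hcf0 : (c.factorial : ℝ) ≠ 0 := Nat.cast_ne_zero.2 (Nat.factorial_ne_zero _)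
    have hpow : (x m / (m.factorial : ℝ)) ^ (c + 1)
        = (x m / (m.factorial : ℝ)) ^ c * (x m / (m.factorial : ℝ)) := pow_succ _ _
    rw [hc0, hpow]
    push_cast
    field_simp
  
theorem stmt_11 (n k : ℕ) (hn : 1 ≤ n) (hk : k ≤ n - 1) (α β : ℝ) (x : ℕ → ℝ) :
    ∑ j ∈ Finset.Icc 1 (n - k),
      (α * j + β) * (n.choose j : ℝ) * x j * bellPoly (n - j) k x
    = (α * n + β * (k + 1)) * bellPoly n (k + 1) x := by
  have hkn : k + 1 ≤ n := by omega
  set L := n - k with hLdef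
  -- reindex LHS over Fin L
  have step1 : ∑ j ∈ Finset.Icc 1 (n - k),
      (α * j + β) * (n.choose j : ℝ) * x j * bellPoly (n - j) k x
      = ∑ i : Fin L, (α * ((i : ℕ) + 1) + β) * (n.choose ((i : ℕ) + 1) : ℝ) *
          x ((i : ℕ) + 1) * bellPoly (n - ((i : ℕ) + 1)) k x := by
    refine Finset.sum_bij' (i := fun a ha => (⟨a - 1, show a - 1 < n - k by
        rw [Finset.mem_Icc] at ha; omega⟩ : Fin L))
      (j := fun i _ => (i : ℕ) + 1) ?_ ?_ ?_ ?_ ?_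
    · intro a ha; exact Finset.mem_univ _
    · intro i _
      have hi : (i : ℕ) < n - k := i.isLt
      rw [Finset.mem_Icc]
      omega
    · intro a ha; rw [Finset.mem_Icc] at ha; simp; omega
    · intro i _; simp
    · intro a ha
      rw [Finset.mem_Icc] at ha
      obtain ⟨b, rfl⟩ : ∃ b, a = b + 1 := ⟨a - 1, by omega⟩
      simp
  -- per-index rewriting via padding and decrement
  have step2 : ∀ i : Fin L,
      (α * ((i : ℕ) + 1) + β) * (n.choose ((i : ℕ) + 1) : ℝ) *
          x ((i : ℕ) + 1) * bellPoly (n - ((i : ℕ) + 1)) k x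
      = (α * ((i : ℕ) + 1) + β) *
          ∑ j ∈ bellA L n (k + 1), (j i : ℝ) * bellT x n j := by
    intro i
    have hiL : (i : ℕ) < L := i.isLt
    have hm : (i : ℕ) + 1 ≤ n := by omega
    rw [← bell_pad x (n - ((i : ℕ) + 1)) k L (by omega), bell_dec x n k L i hm]
    ring
  rw [step1, Finset.sum_congr rfl (fun i _ => step2 i)]
  rw [Finset.sum_congr rfl (fun (i : Fin L) (_ : i ∈ Finset.univ) =>
    Finset.mul_sum (bellA L n (k + 1)) (fun j => (j i : ℝ) * bellT x n j)
      (α * ((i : ℕ) + 1) + β))]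
  rw [Finset.sum_comm]
  rw [← bell_pad x n (k + 1) L (by omega), Finset.mul_sum]
  refine Finset.sum_congr rfl ?_
  intro j hj
  obtain ⟨h1, h2⟩ := mem_bellA.1 hj
  have e1 : ((∑ i : Fin L, ((i : ℕ) + 1) * j i : ℕ) : ℝ) = (n : ℝ) := by rw [h2]
  have e2 : ((∑ i : Fin L, j i : ℕ) : ℝ) = ((k : ℝ) + 1) := by rw [h1]; push_cast; ring
  push_cast at e1 e2
  calc ∑ i : Fin L, (α * ((i : ℕ) + 1) + β) * ((j i : ℝ) * bellT x n j)
      = (∑ i : Fin L, (α * ((i : ℕ) + 1) + β) * (j i : ℝ)) * bellT x n j := by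
        rw [Finset.sum_mul]; exact Finset.sum_congr rfl fun i _ => by ring
    _ = (α * (∑ i : Fin L, (((i : ℕ) : ℝ) + 1) * (j i : ℝ))
          + β * (∑ i : Fin L, (j i : ℝ))) * bellT x n j := by
        rw [Finset.mul_sum, Finset.mul_sum, ← Finset.sum_add_distrib]
        congr 1
        exact Finset.sum_congr rfl fun i _ => by ring
    _ = (α * n + β * ((k : ℝ) + 1)) * bellT x n j := by rw [e1, e2]
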